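/- Let δ_1, δ_2 be nonnegative integers. There exists a polynomial f in the five variables (s_3, a_1, a_2, a_3, a_4), of total degree at most 2δ_1+δ_2, such that for all complex numbers a_1,a_2,a_3,a_4 with a_1+a_2+a_3+a_4 = 0 and with a_2−a_1 ∉ ℤ and a_3−a_1 ∉ ℤ, and for all s_3 ∈ ℂ: ((−1)^{δ_1}/δ_1!)·Γ(a_2−a_1−δ_2)·Γ(a_3−a_1−δ_2)·p_{δ_2}(−δ_1, a_2−a_4−δ_2, s_3−a_3; 1+a_1−a_3, a_2−a_1−δ_1−δ_2, s_3−a_4−δ_2) = Γ(a_2−a_1−δ_1)·Γ(a_3−a_1−δ_1)·f(s_3, a_1, a_2, a_3, a_4). (This is the polynomial factorization, with degree bound 2δ_1+δ_2, of the double residue of the GL(4) Whittaker Mellin transform T_{4,a}(s) at s_1 = −a_1−δ_1 and s_2 = −a_1−a_4−δ_2.) -/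

import Mathlib

open Finset

/-- The ascending Pochhammer symbol `(x)_k = x(x+1)⋯(x+k-1)`, with `(x)_0 = 1`. -/
noncomputable def poch (x : ℂ) (k : ℕ) : ℂ := ∏ i ∈ Finset.range k, (x + i)

/-- The polynomial `p_δ(b,c,d;e,f,g)` of Stade–Trinh, Lemma 4.2. -/
noncomputable def pdelta (δ : ℕ) (b c d e f g : ℂ) : ℂ :=
  ∑ κ ∈ Finset.range (δ + 1),
    (-1 : ℂ) ^ κ * poch b κ * poch c κ * poch d κ *
        poch (e + κ) (δ - κ) * poch (f + κ) (δ - κ) * poch (g + κ) (δ - κ) /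
      ((κ.factorial : ℂ) * ((δ - κ).factorial : ℂ))

lemma poch_succ (x : ℂ) (k : ℕ) : poch x (k+1) = poch x k * (x + k) :=
  Finset.prod_range_succ _ _

lemma gamma_poch (z : ℂ) (n : ℕ) (h : ∀ j : ℕ, j < n → z + j ≠ 0) :
    Complex.Gamma z * poch z n = Complex.Gamma (z + n) := by
  induction n with
  | zero => simp [poch]
  | succ n ih =>
    have hzn : z + n ≠ 0 := h n (Nat.lt_succ_self n)
    have h1 : Complex.Gamma (z + (n+1 : ℕ)) = (z + n) * Complex.Gamma (z + n) := by
      have := Complex.Gamma_add_one (z + n) hzn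
      rw [← this]
      congr 1
      push_cast
      ring
    rw [h1, ← ih (fun j hj => h j (Nat.lt_succ_of_lt hj)), poch_succ]
    ring

lemma poch_reflect (a : ℂ) (m : ℕ) :
    (-1 : ℂ)^m * poch a m = poch (1 - a - m) m := by
  unfold poch
  rw [← Finset.prod_range_reflect (fun i => (1 - a - (m:ℂ) + i)) m]
  have h1 : ∀ j ∈ Finset.range m,
      (1 - a - (m:ℂ) + ((m - 1 - j : ℕ) : ℂ)) = (-1) * (a + j) := by
    intro j hj
    rw [Finset.mem_range] at hj
    have hc : ((m - 1 - j : ℕ) : ℂ) = (m:ℂ) - 1 - j := by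
      rw [Nat.sub_sub, Nat.cast_sub (by omega)]
      push_cast
      ring
    rw [hc]; ring
  rw [Finset.prod_congr rfl h1, Finset.prod_mul_distrib, Finset.prod_const, Finset.card_range]

noncomputable def mvpoch (P : MvPolynomial (Fin 5) ℂ) (k : ℕ) : MvPolynomial (Fin 5) ℂ :=
  ∏ i ∈ Finset.range k, (P + MvPolynomial.C (i : ℂ))

lemma mvpoch_eval (v : Fin 5 → ℂ) (P : MvPolynomial (Fin 5) ℂ) (k : ℕ) :
    MvPolynomial.eval v (mvpoch P k) = poch (MvPolynomial.eval v P) k := by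
  simp [mvpoch, poch]

lemma mvpoch_degree {P : MvPolynomial (Fin 5) ℂ} (hP : P.totalDegree ≤ 1) (k : ℕ) :
    (mvpoch P k).totalDegree ≤ k := by
  refine le_trans (MvPolynomial.totalDegree_finset_prod _ _) ?_
  have h1 : ∀ i ∈ Finset.range k, (P + MvPolynomial.C (i:ℂ)).totalDegree ≤ 1 := by
    intro i _
    refine le_trans (MvPolynomial.totalDegree_add _ _) (sup_le hP ?_)
    rw [MvPolynomial.totalDegree_C]
    exact Nat.zero_le 1
  refine le_trans (Finset.sum_le_sum h1) ?_
  simp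

lemma deg_sub1 {p q : MvPolynomial (Fin 5) ℂ} (hp : p.totalDegree ≤ 1)
    (hq : q.totalDegree ≤ 1) : (p - q).totalDegree ≤ 1 := by
  rw [sub_eq_add_neg]
  exact le_trans (MvPolynomial.totalDegree_add _ _)
    (by simp [MvPolynomial.totalDegree_neg, hp, hq])

lemma deg_add1 {p q : MvPolynomial (Fin 5) ℂ} (hp : p.totalDegree ≤ 1)
    (hq : q.totalDegree ≤ 1) : (p + q).totalDegree ≤ 1 :=
  le_trans (MvPolynomial.totalDegree_add _ _) (by simp [hp, hq])

lemma deg_X1 (i : Fin 5) : (MvPolynomial.X i : MvPolynomial (Fin 5) ℂ).totalDegree ≤ 1 :=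
  le_of_eq (MvPolynomial.totalDegree_X i)

lemma deg_C1 (c : ℂ) : (MvPolynomial.C c : MvPolynomial (Fin 5) ℂ).totalDegree ≤ 1 := by
  simp [MvPolynomial.totalDegree_C]

lemma nonint_sub_add_ne (w : ℂ) (h : ∀ z : ℤ, w ≠ (z : ℂ)) (c : ℤ) : w + c ≠ 0 := by
  intro hh
  exact h (-c) (by push_cast; linear_combination hh)

/-- Proposition 4.4(a) of Stade–Trinh (polynomial factorization with degree
bound `2δ_1 + δ_2` for the double residue of `T_{4,a}(s)` at
`s_1 = −a_1−δ_1`, `s_2 = −a_1−a_4−δ_2`). -/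
theorem double_residue_s1_s2 (δ1 δ2 : ℕ) :
    ∃ f : MvPolynomial (Fin 5) ℂ, f.totalDegree ≤ 2 * δ1 + δ2 ∧
      ∀ a1 a2 a3 a4 : ℂ, a1 + a2 + a3 + a4 = 0 →
        (∀ z : ℤ, a2 - a1 ≠ (z : ℂ)) → (∀ z : ℤ, a3 - a1 ≠ (z : ℂ)) →
        ∀ s3 : ℂ,
          ((-1 : ℂ) ^ δ1 / (δ1.factorial : ℂ)) *
              Complex.Gamma (a2 - a1 - δ2) * Complex.Gamma (a3 - a1 - δ2) *
              pdelta δ2 (-(δ1 : ℂ)) (a2 - a4 - δ2) (s3 - a3)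
                (1 + a1 - a3) (a2 - a1 - δ1 - δ2) (s3 - a4 - δ2)
            = Complex.Gamma (a2 - a1 - δ1) * Complex.Gamma (a3 - a1 - δ1) *
                MvPolynomial.eval ![s3, a1, a2, a3, a4] f := by
  classical
  set A : ℂ := (-1 : ℂ) ^ δ1 / (δ1.factorial : ℂ) with hA
  set coef : ℕ → ℂ := fun κ =>
    A * ((-1)^κ * (-1)^(δ2-κ) * poch (-(δ1:ℂ)) κ /
      ((κ.factorial : ℂ) * ((δ2-κ).factorial : ℂ))) with hcoef
  set F : ℕ → MvPolynomial (Fin 5) ℂ := fun κ =>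
    MvPolynomial.C (coef κ) *
      mvpoch (MvPolynomial.X 2 - MvPolynomial.X 4 - MvPolynomial.C (δ2:ℂ)) κ *
      mvpoch (MvPolynomial.X 0 - MvPolynomial.X 3) κ *
      mvpoch (MvPolynomial.X 3 - MvPolynomial.X 1 - MvPolynomial.C (δ1:ℂ)) (δ1 - κ) *
      mvpoch (MvPolynomial.X 2 - MvPolynomial.X 1 - MvPolynomial.C (δ1:ℂ)
        - MvPolynomial.C (δ2:ℂ) + MvPolynomial.C (κ:ℂ)) (δ1 - κ) *
      mvpoch (MvPolynomial.X 0 - MvPolynomial.X 4 - MvPolynomial.C (δ2:ℂ)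
        + MvPolynomial.C (κ:ℂ)) (δ2 - κ) with hF
  refine ⟨∑ κ ∈ Finset.range (δ2+1), F κ, ?_, ?_⟩
  · refine le_trans (MvPolynomial.totalDegree_finset_sum _ _) (Finset.sup_le fun κ hκ => ?_)
    by_cases hk : κ ≤ δ1
    · have d1 := mvpoch_degree (deg_sub1 (deg_sub1 (deg_X1 2) (deg_X1 4)) (deg_C1 ((δ2:ℕ):ℂ))) κ
      have d2 := mvpoch_degree (deg_sub1 (deg_X1 0) (deg_X1 3)) κ
      have d3 := mvpoch_degree (deg_sub1 (deg_sub1 (deg_X1 3) (deg_X1 1)) (deg_C1 ((δ1:ℕ):ℂ))) (δ1 - κ)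
      have d4 := mvpoch_degree (deg_add1 (deg_sub1 (deg_sub1 (deg_sub1 (deg_X1 2) (deg_X1 1))
        (deg_C1 ((δ1:ℕ):ℂ))) (deg_C1 ((δ2:ℕ):ℂ))) (deg_C1 ((κ:ℕ):ℂ))) (δ1 - κ)
      have d5 := mvpoch_degree (deg_add1 (deg_sub1 (deg_sub1 (deg_X1 0) (deg_X1 4))
        (deg_C1 ((δ2:ℕ):ℂ))) (deg_C1 ((κ:ℕ):ℂ))) (δ2 - κ)
      have dC : (MvPolynomial.C (coef κ) : MvPolynomial (Fin 5) ℂ).totalDegree = 0 :=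
        MvPolynomial.totalDegree_C _
      calc (F κ).totalDegree
          ≤ 0 + κ + κ + (δ1 - κ) + (δ1 - κ) + (δ2 - κ) := by
            rw [hF]
            refine le_trans (MvPolynomial.totalDegree_mul _ _) ?_
            refine add_le_add ?_ d5
            refine le_trans (MvPolynomial.totalDegree_mul _ _) ?_
            refine add_le_add ?_ d4
            refine le_trans (MvPolynomial.totalDegree_mul _ _) ?_
            refine add_le_add ?_ d3
            refine le_trans (MvPolynomial.totalDegree_mul _ _) ?_
            refine add_le_add ?_ d2
            refine le_trans (MvPolynomial.totalDegree_mul _ _) ?_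
            exact add_le_add (le_of_eq dC) d1
        _ ≤ 2 * δ1 + δ2 := by omega
    · have hz : poch (-(δ1:ℂ)) κ = 0 := by
        refine Finset.prod_eq_zero (Finset.mem_range.2 (by omega : δ1 < κ)) ?_
        simp
      have : coef κ = 0 := by simp [hcoef, hz]
      simp [hF, this]
  · intro a1 a2 a3 a4 _hsum h2 h3 s3
    rw [map_sum, pdelta, Finset.mul_sum, Finset.mul_sum]
    refine Finset.sum_congr rfl fun κ hκ => ?_
    rw [Finset.mem_range] at hκ
    have hκ2 : κ ≤ δ2 := by omega
    simp only [hF, map_mul, mvpoch_eval, MvPolynomial.eval_C, map_sub, map_add,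
      MvPolynomial.eval_X, Matrix.cons_val_zero, Matrix.cons_val_one, Matrix.head_cons,
      Matrix.cons_val_two, Matrix.tail_cons, Matrix.cons_val_three, Matrix.cons_val_four]
    by_cases hk : κ ≤ δ1
    · -- main case
      have hmc : ((δ2 - κ : ℕ) : ℂ) = (δ2:ℂ) - κ := by rw [Nat.cast_sub hκ2]
      have hjc : ((δ1 - κ : ℕ) : ℂ) = (δ1:ℂ) - κ := by rw [Nat.cast_sub hk]
      -- reflection for the e-factor
      have refl1 : poch (1 + a1 - a3 + κ) (δ2-κ)
          = (-1:ℂ)^(δ2-κ) * poch (a3 - a1 - δ2) (δ2-κ) := by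
        have h := poch_reflect (a3 - a1 - δ2) (δ2-κ)
        rw [hmc] at h
        have harg : (1:ℂ) - (a3 - a1 - δ2) - ((δ2:ℂ) - κ) = 1 + a1 - a3 + κ := by ring
        rw [harg] at h
        exact h.symm
      have gy2 : Complex.Gamma (a3 - a1 - δ2) * poch (a3 - a1 - δ2) (δ2-κ)
          = Complex.Gamma (a3 - a1 - κ) := by
        rw [gamma_poch _ _ (fun j hj heq => h3 ((δ2:ℤ) - j) (by push_cast; linear_combination heq))]
        rw [hmc]; ring_nf
      have gy1 : Complex.Gamma (a3 - a1 - δ1) * poch (a3 - a1 - δ1) (δ1-κ)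
          = Complex.Gamma (a3 - a1 - κ) := by
        rw [gamma_poch _ _ (fun j hj heq => h3 ((δ1:ℤ) - j) (by push_cast; linear_combination heq))]
        rw [hjc]; ring_nf
      set z : ℂ := a2 - a1 - δ1 - δ2 + κ with hzdef
      have hzne : ∀ j : ℕ, z + j ≠ 0 := fun j heq =>
        h2 ((δ1:ℤ) + δ2 - κ - j) (by push_cast; linear_combination heq)
      have gx2 : Complex.Gamma (a2 - a1 - δ2) = Complex.Gamma z * poch z (δ1-κ) := by
        rw [gamma_poch z (δ1-κ) (fun j _ => hzne j), hjc]
        rw [hzdef]; ring_nf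
      have gx1 : Complex.Gamma (a2 - a1 - δ1) = Complex.Gamma z * poch z (δ2-κ) := by
        rw [gamma_poch z (δ2-κ) (fun j _ => hzne j), hmc]
        rw [hzdef]; ring_nf
      have hy : Complex.Gamma (a3 - a1 - δ2) * poch (1 + a1 - a3 + κ) (δ2-κ)
          = (-1:ℂ)^(δ2-κ) * (Complex.Gamma (a3 - a1 - δ1) * poch (a3 - a1 - δ1) (δ1-κ)) := by
        rw [refl1, gy1, ← gy2]; ring
      have hxy : (Complex.Gamma (a2 - a1 - δ2) * poch (a2 - a1 - δ1 - δ2 + κ) (δ2-κ)) *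
            (Complex.Gamma (a3 - a1 - δ2) * poch (1 + a1 - a3 + κ) (δ2-κ))
          = (Complex.Gamma (a2 - a1 - δ1) * poch (a2 - a1 - δ1 - δ2 + κ) (δ1-κ)) *
            ((-1:ℂ)^(δ2-κ) * (Complex.Gamma (a3 - a1 - δ1) * poch (a3 - a1 - δ1) (δ1-κ))) := by
        rw [← hzdef, hy, gx2, gx1]; ring
      simp only [hcoef]
      linear_combination (A * (-1:ℂ)^κ * poch (-(δ1:ℂ)) κ * poch (a2 - a4 - δ2) κ *
        poch (s3 - a3) κ * poch (s3 - a4 - δ2 + κ) (δ2-κ) /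
        ((κ.factorial : ℂ) * ((δ2-κ).factorial : ℂ))) * hxy
    · have hz : poch (-(δ1:ℂ)) κ = 0 := by
        refine Finset.prod_eq_zero (Finset.mem_range.2 (by omega : δ1 < κ)) ?_
        simp
      simp [hcoef, hz]
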